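/- Let D be a triangulated category with objects {\nabla_s}_{s \in S} indexed by a poset S, satisfying: Hom(\nabla_s, \nabla_t[i]) = 0 for all i whenever s is not \ge t, and End(\nabla_s) \cong k with Hom(\nabla_s, \nabla_s[i]) = 0 for i \ne 0. Suppose each s admits an object \Delta_s and a morphism \iota_s: \Delta_s \to \nabla_s whose cone lies in the triangulated subcategory generated by {\nabla_u : u < s}, with Hom(\Delta_s, \nabla_t[i]) = 0 for all i whenever s > t. Then the pair (\Delta_s, \iota_s) is unique up to unique isomorphism: if (\Delta'_s, \iota'_s) also satisfies these conditions, there is a unique isomorphism f: \Delta_s \to \Delta'_s with \iota'_s \circ f = \iota_s. -/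

import Mathlib

open CategoryTheory Limits Pretriangulated

variable {C : Type*} [Category C] [Preadditive C] [HasZeroObject C] [HasShift C ℤ]
  [∀ n : ℤ, (shiftFunctor C n).Additive] [Pretriangulated C]

/-- `TriaGen B X` says `X` lies in the smallest triangulated subcategory of `C` containing
the objects satisfying `B` (closed under isomorphisms, zero objects, shifts and cones). -/
def TriaGen (B : C → Prop) (X : C) : Prop :=
  ∀ P : C → Prop,
    (∀ {Y Z : C}, (Y ≅ Z) → P Y → P Z) →
    (∀ Y : C, IsZero Y → P Y) →
    (∀ (Y : C) (n : ℤ), P Y → P (Y⟦n⟧)) →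
    (∀ T : Triangle C, (T ∈ distTriang C) → P T.obj₁ → P T.obj₂ → P T.obj₃) →
    (∀ Y : C, B Y → P Y) → P X

/-- If all maps `X ⟶ Y⟦j⟧` vanish, so do all maps `X ⟶ (Y⟦n⟧)⟦m⟧`. -/
lemma vanish_shift_shift {X Y : C} (hY : ∀ (j : ℤ) (f : X ⟶ Y⟦j⟧), f = 0)
    (n m : ℤ) (f : X ⟶ (Y⟦n⟧)⟦m⟧) : f = 0 := by
  have h0 : f ≫ ((shiftFunctorAdd' C n m (n + m) rfl).inv.app Y) = 0 := hY (n + m) _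
  have : f = (f ≫ ((shiftFunctorAdd' C n m (n + m) rfl).inv.app Y)) ≫
      ((shiftFunctorAdd' C n m (n + m) rfl).hom.app Y) := by
    rw [Category.assoc, Iso.inv_hom_id_app]
    simp
  rw [this, h0, zero_comp]

/-- Vanishing of maps into shifts propagates through the triangulated subcategory
generated by objects with this vanishing property. -/
lemma hom_vanish {B : C → Prop} {X K : C} (hK : TriaGen B K)
    (hB : ∀ Y : C, B Y → ∀ (i : ℤ) (f : X ⟶ Y⟦i⟧), f = 0) :
    ∀ (i : ℤ) (f : X ⟶ K⟦i⟧), f = 0 := by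
  refine hK (fun Y => ∀ (i : ℤ) (f : X ⟶ Y⟦i⟧), f = 0) ?_ ?_ ?_ ?_ hB
  · intro Y Z e hY i f
    have h0 : f ≫ (e.inv)⟦i⟧' = 0 := hY i _
    have : f = (f ≫ (e.inv)⟦i⟧') ≫ (e.hom)⟦i⟧' := by
      rw [Category.assoc, ← Functor.map_comp, e.inv_hom_id, CategoryTheory.Functor.map_id,
        Category.comp_id]
    rw [this, h0, zero_comp]
  · intro Y hY i f
    exact ((shiftFunctor C i).map_isZero hY).eq_of_tgt f 0
  · intro Y n hY i f
    exact vanish_shift_shift hY n i f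
  · intro T hT hY1 hY2 i f
    have hT' := Triangle.shift_distinguished T hT i
    have hf3 : f ≫ ((CategoryTheory.shiftFunctor (Triangle C) i).obj T).mor₃ = 0 :=
      vanish_shift_shift hY1 i 1 _
    obtain ⟨g, hg⟩ := Triangle.coyoneda_exact₃ _ hT' f hf3
    have hg0 : g = 0 := hY2 i g
    rw [hg, hg0, zero_comp]
    rfl

/-- Composition with `ι` is bijective on maps from `X` when the cone `K` of `ι`
receives no maps from `X` in any shift. -/
lemma comp_bijective {X P N K : C} (ι : P ⟶ N) (g : N ⟶ K) (h : K ⟶ P⟦(1 : ℤ)⟧)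
    (hT : Triangle.mk ι g h ∈ distTriang C)
    (hvan : ∀ (i : ℤ) (f : X ⟶ K⟦i⟧), f = 0) :
    Function.Bijective (fun φ : X ⟶ P => φ ≫ ι) := by
  constructor
  · intro φ φ' hφ
    have hd : (φ - φ') ≫ ι = 0 := by
      simp only at hφ
      rw [Preadditive.sub_comp, hφ, sub_self]
    have hT2 := inv_rot_of_distTriang _ hT
    obtain ⟨e, he⟩ := Triangle.coyoneda_exact₂ _ hT2 (φ - φ') hd
    have he0 : e = 0 := hvan (-1) e
    rw [he0, zero_comp] at he
    exact sub_eq_zero.mp he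
  · intro ψ
    have hψg : ψ ≫ g = 0 := by
      have h0 : (ψ ≫ g) ≫ (shiftFunctorZero C ℤ).inv.app K = 0 := hvan 0 _
      have : ψ ≫ g = ((ψ ≫ g) ≫ (shiftFunctorZero C ℤ).inv.app K) ≫
          (shiftFunctorZero C ℤ).hom.app K := by
        rw [Category.assoc, Iso.inv_hom_id_app]
        simp
      rw [this, h0, zero_comp]
    obtain ⟨φ, hφ⟩ := Triangle.coyoneda_exact₂ _ hT ψ hψg
    exact ⟨φ, hφ.symm⟩

/-- Uniqueness of the dual object: given a pre-exceptional family `∇` over a poset and an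
index `s`, any two pairs `(Δ, ι : Δ ⟶ ∇ s)` and `(Δ', ι' : Δ' ⟶ ∇ s)` whose cones lie in
the subcategory generated by `{∇ u : u < s}`, and which are orthogonal to `∇ t [i]` for
`t < s`, are related by a unique morphism `f : Δ ⟶ Δ'` with `f ≫ ι' = ι`, and any such
`f` is an isomorphism. -/
theorem dual_object_unique
    {𝕜 : Type*} [Field 𝕜] [Linear 𝕜 C]
    {σ : Type*} [PartialOrder σ] (nabla : σ → C)
    (h₁ : ∀ s t : σ, ¬ t ≤ s → ∀ (i : ℤ) (f : nabla s ⟶ (nabla t)⟦i⟧), f = 0)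
    (h₂ : ∀ (s : σ) (f : nabla s ⟶ nabla s), ∃ c : 𝕜, f = c • 𝟙 (nabla s))
    (h₃ : ∀ (s : σ) (i : ℤ), i ≠ 0 → ∀ f : nabla s ⟶ (nabla s)⟦i⟧, f = 0)
    (s : σ) (Δ Δ' : C) (ι : Δ ⟶ nabla s) (ι' : Δ' ⟶ nabla s)
    (hcone : ∃ (K : C) (g : nabla s ⟶ K) (h : K ⟶ Δ⟦(1 : ℤ)⟧),
      (Triangle.mk ι g h ∈ distTriang C) ∧
        TriaGen (fun Y => ∃ u : σ, u < s ∧ Y = nabla u) K)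
    (hcone' : ∃ (K : C) (g : nabla s ⟶ K) (h : K ⟶ Δ'⟦(1 : ℤ)⟧),
      (Triangle.mk ι' g h ∈ distTriang C) ∧
        TriaGen (fun Y => ∃ u : σ, u < s ∧ Y = nabla u) K)
    (horth : ∀ t : σ, t < s → ∀ (i : ℤ) (f : Δ ⟶ (nabla t)⟦i⟧), f = 0)
    (horth' : ∀ t : σ, t < s → ∀ (i : ℤ) (f : Δ' ⟶ (nabla t)⟦i⟧), f = 0) :
    (∃! f : Δ ⟶ Δ', f ≫ ι' = ι) ∧ (∀ f : Δ ⟶ Δ', f ≫ ι' = ι → IsIso f) := by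
  obtain ⟨K, g, h, hT, hgen⟩ := hcone
  obtain ⟨K', g', h', hT', hgen'⟩ := hcone'
  have hB : ∀ (X : C), (∀ t : σ, t < s → ∀ (i : ℤ) (f : X ⟶ (nabla t)⟦i⟧), f = 0) →
      ∀ Y : C, (∃ u : σ, u < s ∧ Y = nabla u) → ∀ (i : ℤ) (f : X ⟶ Y⟦i⟧), f = 0 := by
    rintro X hX Y ⟨u, hu, rfl⟩ i f
    exact hX u hu i f
  -- maps from Δ (resp. Δ') into shifts of K and K' vanish
  have vΔK' : ∀ (i : ℤ) (f : Δ ⟶ K'⟦i⟧), f = 0 := hom_vanish hgen' (hB Δ horth)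
  have vΔK : ∀ (i : ℤ) (f : Δ ⟶ K⟦i⟧), f = 0 := hom_vanish hgen (hB Δ horth)
  have vΔ'K : ∀ (i : ℤ) (f : Δ' ⟶ K⟦i⟧), f = 0 := hom_vanish hgen (hB Δ' horth')
  have vΔ'K' : ∀ (i : ℤ) (f : Δ' ⟶ K'⟦i⟧), f = 0 := hom_vanish hgen' (hB Δ' horth')
  have bij1 : Function.Bijective (fun φ : Δ ⟶ Δ' => φ ≫ ι') :=
    comp_bijective ι' g' h' hT' vΔK'
  have bij2 : Function.Bijective (fun φ : Δ' ⟶ Δ => φ ≫ ι) :=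
    comp_bijective ι g h hT vΔ'K
  have bij3 : Function.Bijective (fun φ : Δ ⟶ Δ => φ ≫ ι) :=
    comp_bijective ι g h hT vΔK
  have bij4 : Function.Bijective (fun φ : Δ' ⟶ Δ' => φ ≫ ι') :=
    comp_bijective ι' g' h' hT' vΔ'K'
  obtain ⟨f, hf⟩ := bij1.surjective ι
  obtain ⟨e, he⟩ := bij2.surjective ι'
  simp only at hf he
  have hfe : f ≫ e = 𝟙 Δ := by
    apply bij3.injective
    show (f ≫ e) ≫ ι = 𝟙 Δ ≫ ι
    rw [Category.assoc, he, hf, Category.id_comp]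
  have hef : e ≫ f = 𝟙 Δ' := by
    apply bij4.injective
    show (e ≫ f) ≫ ι' = 𝟙 Δ' ≫ ι'
    rw [Category.assoc, hf, he, Category.id_comp]
  have hiso : IsIso f := ⟨e, hfe, hef⟩
  refine ⟨⟨f, hf, fun f' hf' => bij1.injective (by simpa using hf'.trans hf.symm)⟩, ?_⟩
  intro f' hf'
  have : f' = f := bij1.injective (by simpa using hf'.trans hf.symm)
  rw [this]
  exact hiso
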